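/- arXiv:0906.4643 — 4 statements merged into one kernel-verified Lean document; each statement's English description precedes it below -/
import Mathlib

section
/- Fix p ∈ (0,1), q ∈ (p,1), rates R' > m·D(Ber(q)‖Ber(p)) for some m > 0, and let N = ⌈2^{nR'}⌉ independent binary codewords of length n each be drawn i.i.d. Ber(p). Suppose a fixed subset S of coordinates has size ⌊mn⌋. Then the probability that no codeword has at least q·|S| ones on S tends to 0 as n → ∞. -/
open MeasureTheory ProbabilityTheory Filter Finset
open scoped ENNReal

/-- Binary relative entropy in bits. -/
noncomputable def klBer2 (q r : ℝ) : ℝ :=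
  q * Real.logb 2 (q / r) + (1 - q) * Real.logb 2 ((1 - q) / (1 - r))

section Helpers


lemma maxterm_step {k : ℕ} (α : ℝ) (i : ℕ) (hik : i < k) :
    ((k.choose (i+1) : ℝ) * α^(i+1) * (1-α)^(k-(i+1))) * (((i:ℝ)+1) * (1-α))
      = ((k.choose i : ℝ) * α^i * (1-α)^(k-i)) * (((k:ℝ)-(i:ℝ)) * α) := by
  have h1 : (k.choose (i+1) * (i+1) : ℕ) = k.choose i * (k - i) := Nat.choose_succ_right_eq k i
  have h2 : k - i = (k - (i+1)) + 1 := by omega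
  have h3 : ((k - i : ℕ) : ℝ) = (k:ℝ) - i := Nat.cast_sub (le_of_lt hik)
  have h1' : (k.choose (i+1) : ℝ) * ((i:ℝ)+1) = (k.choose i : ℝ) * ((k:ℝ) - i) := by
    have := congrArg (Nat.cast : ℕ → ℝ) h1
    push_cast at this
    rw [← h3]; push_cast; linarith [this]
  calc ((k.choose (i+1) : ℝ) * α^(i+1) * (1-α)^(k-(i+1))) * (((i:ℝ)+1) * (1-α))
      = ((k.choose (i+1) : ℝ) * ((i:ℝ)+1)) * (α^(i+1) * ((1-α)^(k-(i+1)) * (1-α))) := by ring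
    _ = ((k.choose i : ℝ) * ((k:ℝ)-i)) * (α^(i+1) * (1-α)^(k-i)) := by
        rw [h1', h2, pow_succ (1-α) (k-(i+1))]
    _ = ((k.choose i : ℝ) * α^i * (1-α)^(k-i)) * (((k:ℝ)-(i:ℝ)) * α) := by
        rw [pow_succ]; ring

/-- Max-term bound: the binomial pmf at parameter t/k evaluated at t is at least 1/(k+1). -/
lemma maxterm {k t : ℕ} (h1 : 0 < t) (h2 : t < k) :
    (1:ℝ) ≤ ((k:ℝ)+1) * ((k.choose t : ℝ) * ((t:ℝ)/k)^t * (1 - (t:ℝ)/k)^(k-t)) := by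
  have hk : 0 < k := h1.trans h2
  have hkR : (0:ℝ) < k := by exact_mod_cast hk
  have htk : (t:ℝ) ≤ k := by exact_mod_cast h2.le
  set α : ℝ := (t:ℝ)/k with hα
  have hα0 : 0 < α := by positivity
  have hα1 : α < 1 := by rw [hα, div_lt_one hkR]; exact_mod_cast h2
  have hαk : α * k = t := by rw [hα]; field_simp
  have h1αk : (1 - α) * k = (k:ℝ) - t := by rw [hα]; field_simp
  set B : ℕ → ℝ := fun i => (k.choose i : ℝ) * α^i * (1-α)^(k-i) with hB
  have hBpos : ∀ i, i ≤ k → 0 < B i := by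
    intro i hik
    have h4 : 0 < k.choose i := Nat.choose_pos hik
    have h5 : (0:ℝ) < k.choose i := by exact_mod_cast h4
    have h1α : (0:ℝ) < 1 - α := by linarith
    positivity
  have hup : ∀ i, i < t → B i ≤ B (i+1) := by
    intro i hit
    have hik : i < k := hit.trans h2
    have hstep := maxterm_step α i hik
    have hi1 : (i:ℝ)+1 ≤ t := by exact_mod_cast hit
    have hiR : (i:ℝ) < k := by exact_mod_cast hik
    have hcmp : ((i:ℝ)+1) * (1-α) ≤ ((k:ℝ)-i) * α := by
      have key : ((i:ℝ)+1)*((k:ℝ)-t) ≤ ((k:ℝ)-i)*t := by nlinarith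
      have e1 : ((i:ℝ)+1)*(1-α)*k = ((i:ℝ)+1)*((k:ℝ)-t) := by
        rw [mul_assoc, h1αk]
      have e2 : ((k:ℝ)-i)*α*k = ((k:ℝ)-i)*t := by rw [mul_assoc, hαk]
      have := key; rw [← e1, ← e2] at this
      exact le_of_mul_le_mul_right this hkR
    have hpos : (0:ℝ) < ((i:ℝ)+1) * (1-α) := by
      have : (0:ℝ) < 1 - α := by linarith
      positivity
    have hBi := hBpos i hik.le
    have h6 : B i * (((i:ℝ)+1) * (1-α)) ≤ B (i+1) * (((i:ℝ)+1) * (1-α)) := by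
      rw [hstep]
      exact mul_le_mul_of_nonneg_left hcmp hBi.le
    exact le_of_mul_le_mul_right h6 hpos
  have hdown : ∀ i, t ≤ i → i < k → B (i+1) ≤ B i := by
    intro i hti hik
    have hstep := maxterm_step α i hik
    have hi1 : (t:ℝ) ≤ i := by exact_mod_cast hti
    have hiR : (i:ℝ) < k := by exact_mod_cast hik
    have hcmp : ((k:ℝ)-i) * α ≤ ((i:ℝ)+1) * (1-α) := by
      have key : ((k:ℝ)-i)*t ≤ ((i:ℝ)+1)*((k:ℝ)-t) := by nlinarith [h1.le, (by exact_mod_cast h1 : (0:ℝ) < t)]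
      have e1 : ((i:ℝ)+1)*(1-α)*k = ((i:ℝ)+1)*((k:ℝ)-t) := by rw [mul_assoc, h1αk]
      have e2 : ((k:ℝ)-i)*α*k = ((k:ℝ)-i)*t := by rw [mul_assoc, hαk]
      have := key; rw [← e1, ← e2] at this
      exact le_of_mul_le_mul_right this hkR
    have hpos : (0:ℝ) < ((i:ℝ)+1) * (1-α) := by
      have : (0:ℝ) < 1 - α := by linarith
      positivity
    have hBi := hBpos i hik.le
    have h6 : B (i+1) * (((i:ℝ)+1) * (1-α)) ≤ B i * (((i:ℝ)+1) * (1-α)) := by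
      rw [hstep]
      exact mul_le_mul_of_nonneg_left hcmp hBi.le
    exact le_of_mul_le_mul_right h6 hpos
  -- all terms are at most B t
  have hmax : ∀ i, i ≤ k → B i ≤ B t := by
    intro i hik
    rcases le_total i t with hit | hti
    · -- increasing chain, truncated at t
      have := Nat.rel_of_forall_rel_succ_of_le_of_le (β := ℝ) (· ≤ ·)
        (f := fun n => B (min n t)) (a := 0)
        (fun n _ => by
          rcases lt_or_ge n t with h | h
          · have : min n t = n := min_eq_left h.le
            have h2' : min (n+1) t = n + 1 := min_eq_left h
            simp only [this, h2']
            exact hup n h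
          · have e1 : min n t = t := min_eq_right h
            have e2 : min (n+1) t = t := min_eq_right (h.trans (Nat.le_succ n))
            simp [e1, e2])
        (Nat.zero_le i) hit
      simpa [min_eq_left hit, min_self] using this
    · have := Nat.rel_of_forall_rel_succ_of_le_of_le (β := ℝ) (· ≥ ·)
        (f := fun n => B (min n k)) (a := t)
        (fun n hn => by
          rcases lt_or_ge n k with h | h
          · have e1 : min n k = n := min_eq_left h.le
            have e2 : min (n+1) k = n + 1 := min_eq_left h
            simp only [e1, e2, ge_iff_le]
            exact hdown n hn h
          · have e1 : min n k = k := min_eq_right h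
            have e2 : min (n+1) k = k := min_eq_right (h.trans (Nat.le_succ n))
            simp [e1, e2])
        le_rfl hti
      simpa [min_eq_left hik, min_eq_left h2.le] using this
  have hsum : ∑ i ∈ range (k+1), B i = 1 := by
    calc ∑ i ∈ range (k+1), B i
        = ∑ i ∈ range (k+1), α^i * (1-α)^(k-i) * (k.choose i : ℝ) := by
          refine Finset.sum_congr rfl fun i _ => ?_
          simp only [hB]; ring
      _ = (α + (1-α))^k := (add_pow α (1-α) k).symm
      _ = 1 := by norm_num
  calc (1:ℝ) = ∑ i ∈ range (k+1), B i := hsum.symm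
    _ ≤ ∑ _i ∈ range (k+1), B t := by
        apply Finset.sum_le_sum
        intro i hi
        exact hmax i (Nat.lt_succ_iff.mp (mem_range.mp hi))
    _ = ((k:ℝ)+1) * B t := by
        rw [Finset.sum_const, card_range, nsmul_eq_mul]; push_cast; ring
    _ = _ := rfl

noncomputable def covDelta (p : ℝ) (k t : ℕ) : ℝ :=
  ((k:ℝ)+1)⁻¹ * (p/((t:ℝ)/k))^t * ((1-p)/(1-(t:ℝ)/k))^(k-t)


lemma covDelta_pos {p : ℝ} (hp0 : 0 < p) (hp1 : p < 1) {k t : ℕ} (ht1 : 0 < t) (ht2 : t < k) :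
    0 < covDelta p k t := by
  have hk : 0 < k := ht1.trans ht2
  have hkR : (0:ℝ) < k := by exact_mod_cast hk
  have hα0 : (0:ℝ) < (t:ℝ)/k := by
    have : (0:ℝ) < t := by exact_mod_cast ht1
    positivity
  have hα1 : (t:ℝ)/k < 1 := by rw [div_lt_one hkR]; exact_mod_cast ht2
  have h1 : (0:ℝ) < 1 - (t:ℝ)/k := by linarith
  have h2 : (0:ℝ) < 1 - p := by linarith
  unfold covDelta
  positivity

lemma sum_bad_le {p : ℝ} (hp0 : 0 < p) (hp1 : p < 1) {n : ℕ} (S : Finset (Fin n)) {t : ℕ}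
    (ht1 : 0 < t) (ht2 : t < S.card) {x : ℝ} (hx : x ≤ t) :
    ∑ T ∈ S.powerset.filter (fun T => ((T.card:ℝ) < x)), p^T.card * (1-p)^(S.card - T.card)
      ≤ 1 - covDelta p S.card t := by
  classical
  set k := S.card with hk
  have hkpos : 0 < k := ht1.trans ht2
  have hkR : (0:ℝ) < k := by exact_mod_cast hkpos
  have h1p : (0:ℝ) < 1 - p := by linarith
  set α : ℝ := (t:ℝ)/k with hα
  have hα0 : (0:ℝ) < α := by
    have : (0:ℝ) < t := by exact_mod_cast ht1
    positivity
  have hα1 : α < 1 := by rw [hα, div_lt_one hkR]; exact_mod_cast ht2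
  have h1α : (0:ℝ) < 1 - α := by linarith
  -- full sum equals 1
  have hfull : ∑ T ∈ S.powerset, p^T.card * (1-p)^(k - T.card) = 1 := by
    calc ∑ T ∈ S.powerset, p^T.card * (1-p)^(k - T.card)
        = ∑ T ∈ S.powerset, (∏ _j ∈ T, p) * ∏ _j ∈ S \ T, (1-p) := by
          refine Finset.sum_congr rfl fun T hT => ?_
          rw [Finset.prod_const, Finset.prod_const, Finset.card_sdiff_of_subset (Finset.mem_powerset.mp hT)]
      _ = ∏ _j ∈ S, (p + (1-p)) := (Finset.prod_add _ _ S).symm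
      _ = 1 := by simp
  -- split into bad and good
  have hsplit := Finset.sum_filter_add_sum_filter_not S.powerset
    (fun T => ((T.card:ℝ) < x)) (fun T => p^T.card * (1-p)^(k - T.card))
  -- good sum lower bound
  have hgood : covDelta p k t
      ≤ ∑ T ∈ S.powerset.filter (fun T => ¬((T.card:ℝ) < x)), p^T.card * (1-p)^(k - T.card) := by
    have hsub : S.powersetCard t ⊆ S.powerset.filter (fun T => ¬((T.card:ℝ) < x)) := by
      intro T hT
      rw [Finset.mem_powersetCard] at hT
      rw [Finset.mem_filter, Finset.mem_powerset]
      refine ⟨hT.1, ?_⟩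
      rw [hT.2]
      exact not_lt.mpr hx
    have hstep1 : ∑ T ∈ S.powersetCard t, p^T.card * (1-p)^(k - T.card)
        ≤ ∑ T ∈ S.powerset.filter (fun T => ¬((T.card:ℝ) < x)),
            p^T.card * (1-p)^(k - T.card) := by
      refine Finset.sum_le_sum_of_subset_of_nonneg hsub fun T _ _ => ?_
      positivity
    refine le_trans ?_ hstep1
    have hconst : ∑ T ∈ S.powersetCard t, p^T.card * (1-p)^(k - T.card)
        = (k.choose t : ℝ) * (p^t * (1-p)^(k-t)) := by
      calc ∑ T ∈ S.powersetCard t, p^T.card * (1-p)^(k - T.card)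
          = ∑ _T ∈ S.powersetCard t, p^t * (1-p)^(k-t) := by
            refine Finset.sum_congr rfl fun T hT => ?_
            rw [(Finset.mem_powersetCard.mp hT).2]
        _ = (k.choose t : ℝ) * (p^t * (1-p)^(k-t)) := by
            rw [Finset.sum_const, Finset.card_powersetCard, nsmul_eq_mul, hk]
    rw [hconst]
    -- use maxterm
    have hmt := maxterm ht1 ht2
    have hY : (0:ℝ) < (p/α)^t * ((1-p)/(1-α))^(k-t) := by positivity
    have hXδ : ((k:ℝ)+1)⁻¹ ≤ (k.choose t : ℝ) * α^t * (1-α)^(k-t) := by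
      rw [inv_le_iff_one_le_mul₀ (by positivity)]
      calc (1:ℝ) ≤ ((k:ℝ)+1) * ((k.choose t : ℝ) * ((t:ℝ)/k)^t * (1 - (t:ℝ)/k)^(k-t)) := hmt
        _ = (k.choose t : ℝ) * α^t * (1-α)^(k-t) * ((k:ℝ)+1) := by rw [hα]; ring
    have hid : (k.choose t : ℝ) * (p^t * (1-p)^(k-t))
        = ((k.choose t : ℝ) * α^t * (1-α)^(k-t)) * ((p/α)^t * ((1-p)/(1-α))^(k-t)) := by
      have e1 : (p/α)^t * α^t = p^t := by
        rw [← mul_pow, div_mul_cancel₀ _ (ne_of_gt hα0)]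
      have e2 : ((1-p)/(1-α))^(k-t) * (1-α)^(k-t) = (1-p)^(k-t) := by
        rw [← mul_pow, div_mul_cancel₀ _ (ne_of_gt h1α)]
      calc (k.choose t : ℝ) * (p^t * (1-p)^(k-t))
          = (k.choose t : ℝ) * (((p/α)^t * α^t) * (((1-p)/(1-α))^(k-t) * (1-α)^(k-t))) := by
            rw [e1, e2]
        _ = ((k.choose t : ℝ) * α^t * (1-α)^(k-t)) * ((p/α)^t * ((1-p)/(1-α))^(k-t)) := by ring
    rw [hid]
    unfold covDelta
    rw [← hα, mul_assoc]
    exact mul_le_mul_of_nonneg_right hXδ hY.le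
  -- conclude
  have := hsplit
  rw [hfull] at this
  linarith


lemma meas_bad_eq {Ω : Type} [MeasurableSpace Ω] (μ : Measure Ω) [IsProbabilityMeasure μ]
    {Nn n : ℕ} (C : Fin Nn → Fin n → Ω → Bool) (hmeas : ∀ i j, Measurable (C i j))
    (hindep : iIndepFun
      (fun (ij : Fin Nn × Fin n) ω => C ij.1 ij.2 ω) μ)
    {p : ℝ} (hp0 : 0 ≤ p)
    (hber : ∀ i j, μ {ω | C i j ω = true} = ENNReal.ofReal p)
    (S : Finset (Fin n)) (x : ℝ) :
    μ {ω | ∀ i, (∑ j ∈ S, if C i j ω = true then (1:ℝ) else 0) < x}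
      = (∑ T ∈ S.powerset.filter (fun T => ((T.card:ℝ) < x)),
          ENNReal.ofReal p ^ T.card * ENNReal.ofReal (1-p) ^ (S.card - T.card)) ^ Nn := by
  classical
  set Bad := S.powerset.filter (fun T => ((T.card:ℝ) < x)) with hBad
  set E : Fin Nn → Finset (Fin n) → Set Ω :=
    fun i T => ⋂ j ∈ S, (C i j) ⁻¹' {decide (j ∈ T)} with hE
  have hbit : ∀ (i : Fin Nn) (j : Fin n) (b : Bool),
      μ ((C i j) ⁻¹' {b}) = ENNReal.ofReal (if b then p else 1-p) := by
    intro i j b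
    have htrue : (C i j) ⁻¹' {true} = {ω | C i j ω = true} := by ext ω; simp
    cases b with
    | true => rw [htrue]; simpa using hber i j
    | false =>
      have hc : (C i j) ⁻¹' {false} = ((C i j) ⁻¹' {true})ᶜ := by
        ext ω; cases h : C i j ω <;> simp [h]
      rw [hc, measure_compl ((hmeas i j) (measurableSet_singleton true)) (measure_ne_top μ _),
        htrue, hber i j, measure_univ]
      rw [show (1:ENNReal) = ENNReal.ofReal 1 from (ENNReal.ofReal_one).symm,
        ← ENNReal.ofReal_sub _ hp0]
      simp
  -- measure of a full-pattern cell
  have hcell : ∀ g : Fin Nn → Finset (Fin n),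
      μ (⋂ i, E i (g i))
        = ∏ i, ∏ j ∈ S, ENNReal.ofReal (if j ∈ g i then p else 1-p) := by
    intro g
    have hset : (⋂ i, E i (g i)) = ⋂ ij ∈ (Finset.univ ×ˢ S : Finset (Fin Nn × Fin n)),
        (fun ω => C ij.1 ij.2 ω) ⁻¹' {decide (ij.2 ∈ g ij.1)} := by
      simp only [hE]
      ext ω
      simp only [Set.mem_iInter, Set.mem_preimage, Set.mem_singleton_iff, Finset.mem_product,
        Finset.mem_univ, true_and]
      constructor
      · rintro h ⟨i, j⟩ hj; exact h i j hj
      · intro h i j hj; exact h (i, j) hj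
    rw [hset, hindep.meas_biInter (fun ij _ => MeasurableSpace.measurableSet_comap.mpr
      ⟨{decide (ij.2 ∈ g ij.1)}, trivial, rfl⟩)]
    rw [Finset.prod_product]
    refine Finset.prod_congr rfl fun i _ => Finset.prod_congr rfl fun j hj => ?_
    rw [hbit i j]
    by_cases h : j ∈ g i <;> simp [h]
  -- row product in terms of cardinalities
  have hrow : ∀ T : Finset (Fin n), T ⊆ S →
      ∏ j ∈ S, ENNReal.ofReal (if j ∈ T then p else 1-p)
        = ENNReal.ofReal p ^ T.card * ENNReal.ofReal (1-p) ^ (S.card - T.card) := by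
    intro T hTS
    rw [← Finset.prod_sdiff hTS]
    have h1 : ∏ j ∈ T, ENNReal.ofReal (if j ∈ T then p else 1-p) = ENNReal.ofReal p ^ T.card := by
      calc ∏ j ∈ T, ENNReal.ofReal (if j ∈ T then p else 1-p)
          = ∏ _j ∈ T, ENNReal.ofReal p := Finset.prod_congr rfl (fun j hj => by simp [hj])
        _ = ENNReal.ofReal p ^ T.card := by simp
    have h2 : ∏ j ∈ S \ T, ENNReal.ofReal (if j ∈ T then p else 1-p)
        = ENNReal.ofReal (1-p) ^ (S.card - T.card) := by
      calc ∏ j ∈ S \ T, ENNReal.ofReal (if j ∈ T then p else 1-p)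
          = ∏ _j ∈ S \ T, ENNReal.ofReal (1-p) :=
            Finset.prod_congr rfl (fun j hj => by simp [(Finset.mem_sdiff.mp hj).2])
        _ = ENNReal.ofReal (1-p) ^ (S.card - T.card) := by simp [Finset.card_sdiff_of_subset hTS]
    rw [h1, h2, mul_comm]
  -- decomposition of the event
  have hdecomp : {ω | ∀ i, (∑ j ∈ S, if C i j ω = true then (1:ℝ) else 0) < x}
      = ⋃ g ∈ Fintype.piFinset (fun _ : Fin Nn => Bad), ⋂ i, E i (g i) := by
    ext ω
    simp only [Set.mem_setOf_eq, Set.mem_iUnion, Fintype.mem_piFinset, hBad, Finset.mem_filter,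
      Finset.mem_powerset, Set.mem_iInter, Set.mem_preimage, Set.mem_singleton_iff, hE,
      exists_prop]
    constructor
    · intro h
      refine ⟨fun i => S.filter (fun j => C i j ω = true),
        fun i => ⟨Finset.filter_subset _ _, ?_⟩, fun i j hj => ?_⟩
      · have hcard : (((S.filter (fun j => C i j ω = true)).card : ℕ) : ℝ)
            = ∑ j ∈ S, if C i j ω = true then (1:ℝ) else 0 := by
          rw [Finset.card_filter]
          push_cast
          exact Finset.sum_congr rfl fun j _ => by by_cases hc : C i j ω = true <;> simp [hc]
        rw [hcard]; exact h i
      · by_cases hc : C i j ω = true <;> simp [Finset.mem_filter, hj, hc]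
    · rintro ⟨g, hg1, hg2⟩ i
      have hsum : (∑ j ∈ S, if C i j ω = true then (1:ℝ) else 0) = ((g i).card : ℝ) := by
        have hc : ∀ j ∈ S, (if C i j ω = true then (1:ℝ) else 0) = (if j ∈ g i then 1 else 0) := by
          intro j hj
          rw [hg2 i j hj]
          by_cases h : j ∈ g i <;> simp [h]
        have h7 : S.filter (fun j => j ∈ g i) = g i := by
          rw [Finset.filter_mem_eq_inter, Finset.inter_eq_right.mpr (hg1 i).1]
        calc (∑ j ∈ S, if C i j ω = true then (1:ℝ) else 0)
            = ∑ j ∈ S, (if j ∈ g i then (1:ℝ) else 0) := Finset.sum_congr rfl hc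
          _ = (((S.filter (fun j => j ∈ g i)).card : ℕ) : ℝ) := by
              rw [Finset.card_filter]
              push_cast
              exact Finset.sum_congr rfl fun j _ => by by_cases h : j ∈ g i <;> simp [h]
          _ = ((g i).card : ℝ) := by rw [h7]
      rw [hsum]; exact (hg1 i).2
  -- disjointness
  have hdisj : ((Fintype.piFinset (fun _ : Fin Nn => Bad) : Finset (Fin Nn → Finset (Fin n))) :
      Set (Fin Nn → Finset (Fin n))).PairwiseDisjoint
      (fun g : Fin Nn → Finset (Fin n) => ⋂ i, E i (g i)) := by
    intro g hg g' hg' hne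
    simp only [Function.onFun]
    rw [Set.disjoint_left]
    intro ω hω hω'
    obtain ⟨i, hi⟩ := Function.ne_iff.mp hne
    have hgS : g i ⊆ S := by
      have := Fintype.mem_piFinset.mp hg i
      rw [hBad, Finset.mem_filter, Finset.mem_powerset] at this
      exact this.1
    have hg'S : g' i ⊆ S := by
      have := Fintype.mem_piFinset.mp hg' i
      rw [hBad, Finset.mem_filter, Finset.mem_powerset] at this
      exact this.1
    obtain ⟨j, hj⟩ : ∃ j, ¬(j ∈ g i ↔ j ∈ g' i) := by
      by_contra hcon
      push_neg at hcon
      exact hi (Finset.ext fun j => hcon j)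
    have hjS : j ∈ S := by
      by_cases h : j ∈ g i
      · exact hgS h
      · have : j ∈ g' i := by tauto
        exact hg'S this
    have h1 : C i j ω = decide (j ∈ g i) := by
      have := Set.mem_iInter.mp hω i
      simp only [hE] at this
      have := Set.mem_iInter.mp this j
      simpa [hjS] using Set.mem_iInter.mp this hjS
    have h2 : C i j ω = decide (j ∈ g' i) := by
      have := Set.mem_iInter.mp hω' i
      simp only [hE] at this
      have := Set.mem_iInter.mp this j
      simpa [hjS] using Set.mem_iInter.mp this hjS
    rw [h1] at h2
    apply hj
    constructor
    · intro h
      have := (decide_eq_true (p := j ∈ g i) h) ▸ h2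
      exact of_decide_eq_true this.symm
    · intro h
      have := (decide_eq_true (p := j ∈ g' i) h) ▸ h2
      exact of_decide_eq_true this
  -- measurability of cells
  have hEmeas : ∀ g : Fin Nn → Finset (Fin n), MeasurableSet (⋂ i, E i (g i)) := by
    intro g
    refine MeasurableSet.iInter fun i => ?_
    simp only [hE]
    exact MeasurableSet.biInter (Set.to_countable _)
      (fun j _ => (hmeas i j) (measurableSet_singleton _))
  -- putting it together
  rw [hdecomp, measure_biUnion_finset hdisj (fun g _ => hEmeas g)]
  have : ∀ g ∈ Fintype.piFinset (fun _ : Fin Nn => Bad),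
      μ (⋂ i, E i (g i)) = ∏ i, (ENNReal.ofReal p ^ (g i).card
        * ENNReal.ofReal (1-p) ^ (S.card - (g i).card)) := by
    intro g hg
    rw [hcell g]
    refine Finset.prod_congr rfl fun i _ => ?_
    have hgS : g i ⊆ S := by
      have := Fintype.mem_piFinset.mp hg i
      rw [hBad, Finset.mem_filter, Finset.mem_powerset] at this
      exact this.1
    exact hrow (g i) hgS
  rw [Finset.sum_congr rfl this]
  calc ∑ g ∈ Fintype.piFinset (fun _ : Fin Nn => Bad), ∏ i : Fin Nn,
        (ENNReal.ofReal p ^ (g i).card * ENNReal.ofReal (1-p) ^ (S.card - (g i).card))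
      = ∏ _i : Fin Nn, ∑ T ∈ Bad,
          (ENNReal.ofReal p ^ T.card * ENNReal.ofReal (1-p) ^ (S.card - T.card)) :=
        (Finset.prod_univ_sum (fun _ : Fin Nn => Bad)
          (fun _ T => ENNReal.ofReal p ^ T.card * ENNReal.ofReal (1-p) ^ (S.card - T.card))).symm
    _ = (∑ T ∈ Bad, ENNReal.ofReal p ^ T.card * ENNReal.ofReal (1-p) ^ (S.card - T.card)) ^ Nn := by
        simp



variable {p q m R' : ℝ}

/-- floor(mn)/n → m -/
lemma floor_div_tendsto (hm : 0 < m) :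
    Tendsto (fun n : ℕ => ((⌊m * n⌋₊ : ℝ) / n)) atTop (nhds m) := by
  apply tendsto_of_tendsto_of_tendsto_of_le_of_le' (g := fun n : ℕ => m - 1/(n:ℝ))
    (h := fun _ : ℕ => m)
  · simpa using tendsto_const_nhds.sub (tendsto_one_div_atTop_nhds_zero_nat (𝕜 := ℝ))
  · exact tendsto_const_nhds
  · filter_upwards [eventually_ge_atTop 1] with n hn
    have hnR : (0:ℝ) < n := by exact_mod_cast hn
    have h1 : m * n - 1 < (⌊m * n⌋₊ : ℝ) := Nat.sub_one_lt_floor _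
    rw [le_div_iff₀ hnR]
    calc (m - 1/n) * n = m * n - 1 := by field_simp
      _ ≤ (⌊m * n⌋₊ : ℝ) := h1.le
  · filter_upwards [eventually_ge_atTop 1] with n hn
    have hnR : (0:ℝ) < n := by exact_mod_cast hn
    rw [div_le_iff₀ hnR]
    calc (⌊m * n⌋₊ : ℝ) ≤ m * n := Nat.floor_le (by positivity)
      _ = m * n := rfl

lemma floor_tendsto_atTop (hm : 0 < m) :
    Tendsto (fun n : ℕ => ⌊m * n⌋₊) atTop atTop := by
  rw [← tendsto_natCast_atTop_iff (R := ℝ)]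
  apply tendsto_atTop_mono' _ _ (tendsto_atTop_add_const_right _ (-1)
    ((tendsto_natCast_atTop_atTop (R := ℝ)).const_mul_atTop hm))
  filter_upwards with n
  have := Nat.sub_one_lt_floor (m * n)
  linarith

lemma alpha_tendsto (hm : 0 < m) (hq0 : 0 < q) (hq1 : q < 1) :
    Tendsto (fun n : ℕ => ((⌈q * (⌊m * n⌋₊:ℕ)⌉₊ : ℝ) / (⌊m * n⌋₊:ℕ))) atTop (nhds q) := by
  have hk := floor_tendsto_atTop (m := m) hm
  have hkR : Tendsto (fun n : ℕ => ((⌊m * n⌋₊:ℕ):ℝ)) atTop atTop :=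
    tendsto_natCast_atTop_iff.mpr hk
  apply tendsto_of_tendsto_of_tendsto_of_le_of_le' (g := fun _ : ℕ => q)
    (h := fun n : ℕ => q + ((⌊m * n⌋₊:ℕ):ℝ)⁻¹)
  · exact tendsto_const_nhds
  · simpa using tendsto_const_nhds.add hkR.inv_tendsto_atTop
  · filter_upwards [hk.eventually_ge_atTop 1] with n hn
    have hkpos : (0:ℝ) < ((⌊m * n⌋₊:ℕ):ℝ) := by exact_mod_cast hn
    rw [le_div_iff₀ hkpos]
    exact Nat.le_ceil _
  · filter_upwards [hk.eventually_ge_atTop 1] with n hn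
    have hkpos : (0:ℝ) < ((⌊m * n⌋₊:ℕ):ℝ) := by exact_mod_cast hn
    rw [div_le_iff₀ hkpos]
    have := (Nat.ceil_lt_add_one (a := q * (⌊m * n⌋₊:ℕ)) (by positivity)).le
    calc ((⌈q * (⌊m * n⌋₊:ℕ)⌉₊:ℕ) : ℝ) ≤ q * (⌊m * n⌋₊:ℕ) + 1 := this
      _ = (q + ((⌊m * n⌋₊:ℕ):ℝ)⁻¹) * ((⌊m * n⌋₊:ℕ):ℝ) := by field_simp

lemma klBer2_continuousAt (hp0 : 0 < p) (hp1 : p < 1) (hq0 : 0 < q) (hq1 : q < 1) :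
    ContinuousAt (fun y : ℝ => klBer2 y p) q := by
  have h2 : Real.log 2 ≠ 0 := by
    have := Real.log_pos (by norm_num : (1:ℝ) < 2); linarith
  unfold klBer2 Real.logb
  apply ContinuousAt.add
  · apply ContinuousAt.mul continuousAt_id
    apply ContinuousAt.div_const
    exact (Real.continuousAt_log (by positivity)).comp (continuousAt_id.div_const p)
  · apply ContinuousAt.mul (continuousAt_const.sub continuousAt_id)
    apply ContinuousAt.div_const
    refine (Real.continuousAt_log ?_).comp
      ((continuousAt_const.sub continuousAt_id).div_const (1-p))
    have : (0:ℝ) < 1 - q := by linarith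
    have h1p : (0:ℝ) < 1 - p := by linarith
    positivity

lemma log_linear_div_tendsto (hm : 0 < m) :
    Tendsto (fun n : ℕ => Real.log (m * n + 1) / n) atTop (nhds 0) := by
  have hlin : Tendsto (fun n : ℕ => m * n + 1) atTop atTop :=
    tendsto_atTop_add_const_right _ 1 ((tendsto_natCast_atTop_atTop (R := ℝ)).const_mul_atTop hm)
  have h1 : Tendsto (fun n : ℕ => Real.log (m * n + 1) / (m * n + 1)) atTop (nhds 0) :=
    (Real.isLittleO_log_id_atTop.tendsto_div_nhds_zero).comp hlin
  have h2 : Tendsto (fun n : ℕ => (m * n + 1) / n) atTop (nhds m) := by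
    have : Tendsto (fun n : ℕ => m + 1/(n:ℝ)) atTop (nhds m) := by
      simpa using tendsto_const_nhds.add (tendsto_one_div_atTop_nhds_zero_nat (𝕜 := ℝ))
    apply this.congr'
    filter_upwards [eventually_ge_atTop 1] with n hn
    have hnR : (0:ℝ) < n := by exact_mod_cast hn
    field_simp
  have := h1.mul h2
  rw [zero_mul] at this
  apply this.congr'
  filter_upwards [eventually_ge_atTop 1] with n hn
  have hnR : (0:ℝ) < n := by exact_mod_cast hn
  have hl : (0:ℝ) < m * n + 1 := by positivity
  field_simp

lemma covDelta_mul_N_tendsto (hp0 : 0 < p) (hp1 : p < 1) (hpq : p < q) (hq1 : q < 1)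
    (hm : 0 < m) (hR' : m * klBer2 q p < R') :
    Tendsto (fun n : ℕ => covDelta p (⌊m * n⌋₊) (⌈q * ((⌊m * n⌋₊:ℕ):ℝ)⌉₊)
      * ((⌈(2:ℝ) ^ ((n : ℝ) * R')⌉₊ : ℕ) : ℝ)) atTop atTop := by
  have hq0 : 0 < q := hp0.trans hpq
  have hlog2 : (0:ℝ) < Real.log 2 := Real.log_pos (by norm_num)
  set k : ℕ → ℕ := fun n => ⌊m * n⌋₊ with hkdef
  set t : ℕ → ℕ := fun n => ⌈q * ((k n:ℕ):ℝ)⌉₊ with htdef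
  set Nr : ℕ → ℝ := fun n => ((⌈(2:ℝ) ^ ((n : ℝ) * R')⌉₊ : ℕ) : ℝ) with hNdef
  set α : ℕ → ℝ := fun n => ((t n : ℕ):ℝ) / ((k n : ℕ):ℝ) with hαdef
  set ψ : ℕ → ℝ := fun n => R' - (((k n:ℕ):ℝ)/n) * klBer2 (α n) p
      - Real.logb 2 (((k n:ℕ):ℝ)+1) / n with hψdef
  have hkT := floor_tendsto_atTop (m := m) hm
  have hαT : Tendsto α atTop (nhds q) := alpha_tendsto hm hq0 hq1
  -- limit of ψ
  have hψT : Tendsto ψ atTop (nhds (R' - m * klBer2 q p - 0)) := by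
    apply Tendsto.sub
    · apply Tendsto.sub tendsto_const_nhds
      exact (floor_div_tendsto hm).mul
        (((klBer2_continuousAt hp0 hp1 hq0 hq1).tendsto).comp hαT)
    · -- logb 2 (k+1)/n → 0
      have hnn : Tendsto (fun n : ℕ => Real.log (((k n:ℕ):ℝ)+1) / n) atTop (nhds 0) := by
        apply tendsto_of_tendsto_of_tendsto_of_le_of_le' (g := fun _ : ℕ => (0:ℝ))
          (h := fun n : ℕ => Real.log (m * n + 1) / n)
        · exact tendsto_const_nhds
        · exact log_linear_div_tendsto hm
        · filter_upwards [eventually_ge_atTop 1] with n hn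
          have hnR : (0:ℝ) < n := by exact_mod_cast hn
          have : (0:ℝ) ≤ Real.log (((k n:ℕ):ℝ)+1) :=
            Real.log_nonneg (le_add_of_nonneg_left (Nat.cast_nonneg _))
          exact div_nonneg this hnR.le
        · filter_upwards [eventually_ge_atTop 1] with n hn
          have hnR : (0:ℝ) < n := by exact_mod_cast hn
          have hnum : Real.log (((k n:ℕ):ℝ)+1) ≤ Real.log (m * n + 1) := by
            apply Real.log_le_log (by positivity)
            have : ((k n:ℕ):ℝ) ≤ m * n := Nat.floor_le (by positivity)
            linarith
          gcongr
      have : Tendsto (fun n : ℕ => (Real.log (((k n:ℕ):ℝ)+1) / n) / Real.log 2)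
          atTop (nhds (0 / Real.log 2)) := hnn.div_const _
      rw [zero_div] at this
      apply this.congr
      intro n
      rw [Real.logb]
      ring
  rw [sub_zero] at hψT
  have hc : 0 < R' - m * klBer2 q p := by linarith
  -- n log 2 * ψ n → ∞
  have hmain : Tendsto (fun n : ℕ => ((n:ℝ) * Real.log 2) * ψ n) atTop atTop :=
    Tendsto.atTop_mul_pos hc ((tendsto_natCast_atTop_atTop (R := ℝ)).atTop_mul_const hlog2) hψT
  -- eventual regime
  have hreg : ∀ᶠ n : ℕ in atTop, 1 ≤ n ∧ 1 ≤ k n ∧ 0 < t n ∧ t n < k n := by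
    have hev1 := eventually_ge_atTop 1 (α := ℕ)
    have hev2 := hkT.eventually_ge_atTop 1
    have hev3 : ∀ᶠ n : ℕ in atTop, (1/(1-q) : ℝ) + 1 ≤ ((k n:ℕ):ℝ) :=
      (tendsto_natCast_atTop_iff.mpr hkT).eventually_ge_atTop _
    filter_upwards [hev1, hev2, hev3] with n h1 h2 h3
    refine ⟨h1, h2, ?_, ?_⟩
    · apply Nat.ceil_pos.mpr
      have : (0:ℝ) < ((k n:ℕ):ℝ) := by exact_mod_cast h2
      positivity
    · have h1q : (0:ℝ) < 1 - q := by linarith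
      have hKR : (0:ℝ) < ((k n:ℕ):ℝ) := by exact_mod_cast h2
      have hceil : ((t n : ℕ):ℝ) < q * ((k n:ℕ):ℝ) + 1 :=
        Nat.ceil_lt_add_one (by positivity)
      have hbound : q * ((k n:ℕ):ℝ) + 1 ≤ ((k n:ℕ):ℝ) := by
        have hx : (1/(1-q) : ℝ) ≤ ((k n:ℕ):ℝ) := by linarith
        rw [div_le_iff₀ h1q] at hx
        nlinarith
      have : ((t n : ℕ):ℝ) < ((k n:ℕ):ℝ) := lt_of_lt_of_le hceil hbound
      exact_mod_cast this
  -- eventual lower bound on the log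
  have hlb : ∀ᶠ n : ℕ in atTop, ((n:ℝ) * Real.log 2) * ψ n
      ≤ Real.log (covDelta p (k n) (t n) * Nr n) := by
    filter_upwards [hreg] with n ⟨hn1, hk1, ht1, htk⟩
    have hnR : (0:ℝ) < n := by exact_mod_cast hn1
    have hKR : (0:ℝ) < ((k n:ℕ):ℝ) := by exact_mod_cast hk1
    have hTR : (0:ℝ) < ((t n:ℕ):ℝ) := by exact_mod_cast ht1
    have hα0 : 0 < α n := by rw [hαdef]; positivity
    have hα1 : α n < 1 := by
      rw [hαdef]; rw [div_lt_one hKR]; exact_mod_cast htk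
    have h1α : (0:ℝ) < 1 - α n := by linarith
    have h1p : (0:ℝ) < 1 - p := by linarith
    have hδpos : 0 < covDelta p (k n) (t n) := by
      unfold covDelta
      have e : ((t n:ℕ):ℝ)/((k n:ℕ):ℝ) = α n := rfl
      rw [e]
      positivity
    have hNpos : (0:ℝ) < Nr n := by
      rw [hNdef]
      have h2 : (0:ℝ) < (2:ℝ) ^ ((n : ℝ) * R') := by positivity
      calc (0:ℝ) < (2:ℝ) ^ ((n : ℝ) * R') := h2
        _ ≤ _ := Nat.le_ceil _
    rw [Real.log_mul (ne_of_gt hδpos) (ne_of_gt hNpos)]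
    -- log N ≥ n R' log 2
    have hlogN : (n:ℝ) * R' * Real.log 2 ≤ Real.log (Nr n) := by
      calc (n:ℝ) * R' * Real.log 2 = ((n:ℝ) * R') * Real.log 2 := by ring
        _ = Real.log ((2:ℝ) ^ ((n : ℝ) * R')) := (Real.log_rpow (by norm_num) _).symm
        _ ≤ Real.log (Nr n) := Real.log_le_log (by positivity) (Nat.le_ceil _)
    -- log covDelta
    have hlogδ : Real.log (covDelta p (k n) (t n))
        = -Real.log (((k n:ℕ):ℝ)+1) - ((k n:ℕ):ℝ) * Real.log 2 * klBer2 (α n) p := by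
      unfold covDelta
      have e : ((t n:ℕ):ℝ)/((k n:ℕ):ℝ) = α n := rfl
      rw [e]
      have hpα : p / α n ≠ 0 := by positivity
      have hpα' : (0:ℝ) < (1-p)/(1-α n) := by positivity
      rw [Real.log_mul (by positivity) (by positivity), Real.log_mul (by positivity) (by positivity)]
      rw [Real.log_inv, Real.log_pow, Real.log_pow]
      have hcast : (((k n - t n : ℕ)):ℝ) = ((k n:ℕ):ℝ) - ((t n:ℕ):ℝ) :=
        Nat.cast_sub htk.le
      rw [hcast]
      have hTα : ((t n:ℕ):ℝ) = α n * ((k n:ℕ):ℝ) := by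
        rw [hαdef]; field_simp
      have hl1 : Real.log (p / α n) = -(Real.logb 2 (α n / p) * Real.log 2) := by
        rw [Real.logb, div_mul_cancel₀ _ (ne_of_gt hlog2)]
        rw [← Real.log_inv]
        congr 1
        field_simp
      have hl2 : Real.log ((1-p) / (1-α n)) = -(Real.logb 2 ((1-α n) / (1-p)) * Real.log 2) := by
        rw [Real.logb, div_mul_cancel₀ _ (ne_of_gt hlog2)]
        rw [← Real.log_inv]
        congr 1
        field_simp
      rw [hl1, hl2]
      unfold klBer2
      rw [hTα]
      ring
    rw [hlogδ]
    have hlogb : Real.logb 2 (((k n:ℕ):ℝ)+1) * Real.log 2 = Real.log (((k n:ℕ):ℝ)+1) := by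
      rw [Real.logb, div_mul_cancel₀ _ (ne_of_gt hlog2)]
    have hexp : ((n:ℝ) * Real.log 2) * ψ n
        = -Real.log (((k n:ℕ):ℝ)+1) - ((k n:ℕ):ℝ) * Real.log 2 * klBer2 (α n) p
          + (n:ℝ) * R' * Real.log 2 := by
      have hne : (n:ℝ) ≠ 0 := ne_of_gt hnR
      have en : (n:ℝ) * (((k n:ℕ):ℝ)/(n:ℝ)) = ((k n:ℕ):ℝ) := by field_simp
      have en2 : (n:ℝ) * (Real.logb 2 (((k n:ℕ):ℝ)+1) / (n:ℝ))
          = Real.logb 2 (((k n:ℕ):ℝ)+1) := by field_simp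
      calc ((n:ℝ) * Real.log 2) * ψ n
          = (n:ℝ)*R'*Real.log 2
            - ((n:ℝ) * (((k n:ℕ):ℝ)/(n:ℝ))) * klBer2 (α n) p * Real.log 2
            - ((n:ℝ) * (Real.logb 2 (((k n:ℕ):ℝ)+1) / (n:ℝ))) * Real.log 2 := by
            rw [hψdef]; ring
        _ = _ := by rw [en, en2, hlogb]; ring
    rw [hexp]
    linarith
  -- conclude: log of product tends to atTop, hence product does
  have hlogT : Tendsto (fun n : ℕ => Real.log (covDelta p (k n) (t n) * Nr n)) atTop atTop :=
    tendsto_atTop_mono' _ hlb hmain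
  have := Real.tendsto_exp_atTop.comp hlogT
  apply this.congr'
  filter_upwards [hreg] with n ⟨hn1, hk1, ht1, htk⟩
  have hKR : (0:ℝ) < ((k n:ℕ):ℝ) := by exact_mod_cast hk1
  have hTR : (0:ℝ) < ((t n:ℕ):ℝ) := by exact_mod_cast ht1
  have hα0 : 0 < α n := by rw [hαdef]; positivity
  have hα1 : α n < 1 := by rw [hαdef]; rw [div_lt_one hKR]; exact_mod_cast htk
  have h1α : (0:ℝ) < 1 - α n := by linarith
  have h1p : (0:ℝ) < 1 - p := by linarith
  have hδpos : 0 < covDelta p (k n) (t n) := by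
    unfold covDelta
    have e : ((t n:ℕ):ℝ)/((k n:ℕ):ℝ) = α n := rfl
    rw [e]; positivity
  have hNpos : (0:ℝ) < Nr n := by
    rw [hNdef]
    calc (0:ℝ) < (2:ℝ) ^ ((n : ℝ) * R') := by positivity
      _ ≤ _ := Nat.le_ceil _
  simp only [Function.comp]
  rw [Real.exp_log (by positivity)]



end Helpers

/-- Covering step: with `N = ⌈2^{nR'}⌉` i.i.d. Ber(p) codewords of length `n` and
`R' > m·D(Ber q‖Ber p)`, the probability that no codeword has at least `q·|S|` ones
on a prescribed set `S` of `⌊mn⌋` coordinates tends to `0`. -/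
theorem covering_success (p q m R' : ℝ) (hp : p ∈ Set.Ioo (0 : ℝ) 1)
    (hq : q ∈ Set.Ioo p 1) (hm : 0 < m) (hR' : m * klBer2 q p < R')
    (Ω : ℕ → Type) [ms : ∀ n, MeasurableSpace (Ω n)]
    (μ : ∀ n, Measure (Ω n)) [∀ n, IsProbabilityMeasure (μ n)]
    (N : ℕ → ℕ) (hN : ∀ n, N n = ⌈(2 : ℝ) ^ ((n : ℝ) * R')⌉₊)
    (C : ∀ n, Fin (N n) → Fin n → Ω n → Bool)
    (hmeas : ∀ n i j, Measurable (C n i j))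
    (hindep : ∀ n, iIndepFun
      (fun (ij : Fin (N n) × Fin n) ω => C n ij.1 ij.2 ω) (μ n))
    (hber : ∀ n i j, μ n {ω | C n i j ω = true} = ENNReal.ofReal p)
    (S : ∀ n, Finset (Fin n)) (hS : ∀ n, (S n).card = ⌊m * n⌋₊) :
    Tendsto
      (fun n => μ n {ω | ∀ i : Fin (N n),
        (∑ j ∈ S n, (if C n i j ω = true then (1 : ℝ) else 0)) < q * (S n).card})
      atTop (nhds 0) := by
  obtain ⟨hp0, hp1⟩ := hp
  obtain ⟨hpq, hq1⟩ := hq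
  have hq0 : 0 < q := hp0.trans hpq
  set D : ℕ → ℝ := fun n => covDelta p (⌊m * n⌋₊) (⌈q * ((⌊m * n⌋₊:ℕ):ℝ)⌉₊)
    * ((⌈(2:ℝ) ^ ((n : ℝ) * R')⌉₊ : ℕ) : ℝ) with hD
  have hDT : Tendsto D atTop atTop := covDelta_mul_N_tendsto hp0 hp1 hpq hq1 hm hR'
  have hexp0 : Tendsto (fun n => Real.exp (-(D n))) atTop (nhds 0) :=
    Real.tendsto_exp_atBot.comp (tendsto_neg_atTop_atBot.comp hDT)
  have hof : Tendsto (fun n => ENNReal.ofReal (Real.exp (-(D n)))) atTop (nhds 0) := by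
    simpa using ENNReal.tendsto_ofReal hexp0
  -- regime
  have hkT := floor_tendsto_atTop (m := m) hm
  have hreg : ∀ᶠ n : ℕ in atTop, 1 ≤ ⌊m * n⌋₊ ∧ 0 < ⌈q * ((⌊m * n⌋₊:ℕ):ℝ)⌉₊ ∧
      ⌈q * ((⌊m * n⌋₊:ℕ):ℝ)⌉₊ < ⌊m * n⌋₊ := by
    have hev2 := hkT.eventually_ge_atTop 1
    have hev3 : ∀ᶠ n : ℕ in atTop, (1/(1-q) : ℝ) + 1 ≤ ((⌊m * n⌋₊:ℕ):ℝ) :=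
      (tendsto_natCast_atTop_iff.mpr hkT).eventually_ge_atTop _
    filter_upwards [hev2, hev3] with n h2 h3
    have hKR : (0:ℝ) < ((⌊m * n⌋₊:ℕ):ℝ) := by exact_mod_cast h2
    refine ⟨h2, Nat.ceil_pos.mpr (by positivity), ?_⟩
    have h1q : (0:ℝ) < 1 - q := by linarith
    have hceil : ((⌈q * ((⌊m * n⌋₊:ℕ):ℝ)⌉₊ : ℕ):ℝ) < q * ((⌊m * n⌋₊:ℕ):ℝ) + 1 :=
      Nat.ceil_lt_add_one (by positivity)
    have hbound : q * ((⌊m * n⌋₊:ℕ):ℝ) + 1 ≤ ((⌊m * n⌋₊:ℕ):ℝ) := by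
      have hx : (1/(1-q) : ℝ) ≤ ((⌊m * n⌋₊:ℕ):ℝ) := by linarith
      rw [div_le_iff₀ h1q] at hx
      nlinarith
    have : ((⌈q * ((⌊m * n⌋₊:ℕ):ℝ)⌉₊ : ℕ):ℝ) < ((⌊m * n⌋₊:ℕ):ℝ) :=
      lt_of_lt_of_le hceil hbound
    exact_mod_cast this
  apply tendsto_of_tendsto_of_tendsto_of_le_of_le' (g := fun _ : ℕ => (0:ℝ≥0∞))
    tendsto_const_nhds hof
  · filter_upwards with n
    exact zero_le
  · filter_upwards [hreg] with n hn
    have hcard : (S n).card = ⌊m * n⌋₊ := hS n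
    obtain ⟨hk1, ht1, htk⟩ := hn
    rw [← hcard] at hk1 ht1 htk
    set t : ℕ := ⌈q * (((S n).card:ℕ):ℝ)⌉₊ with htdef
    -- exact measure computation
    have hmeq := meas_bad_eq (μ n) (C n) (hmeas n) (hindep n) hp0.le (hber n) (S n)
      (q * (((S n).card:ℕ):ℝ))
    rw [hmeq]
    -- convert inner sum to ofReal of real sum
    set r' : ℝ := ∑ T ∈ (S n).powerset.filter (fun T => ((T.card:ℝ) < q * (((S n).card:ℕ):ℝ))),
      p^T.card * (1-p)^((S n).card - T.card) with hr'
    have h1p : (0:ℝ) < 1 - p := by linarith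
    have hconv : (∑ T ∈ (S n).powerset.filter (fun T => ((T.card:ℝ) < q * (((S n).card:ℕ):ℝ))),
        ENNReal.ofReal p ^ T.card * ENNReal.ofReal (1-p) ^ ((S n).card - T.card))
        = ENNReal.ofReal r' := by
      rw [hr', ENNReal.ofReal_sum_of_nonneg (fun T _ => by positivity)]
      refine Finset.sum_congr rfl fun T _ => ?_
      rw [ENNReal.ofReal_mul (by positivity), ENNReal.ofReal_pow hp0.le,
        ENNReal.ofReal_pow h1p.le]
    rw [hconv]
    have hr'0 : 0 ≤ r' := by
      rw [hr']
      exact Finset.sum_nonneg fun T _ => by positivity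
    rw [← ENNReal.ofReal_pow hr'0]
    apply ENNReal.ofReal_le_ofReal
    -- real-side bound
    have hx : q * (((S n).card:ℕ):ℝ) ≤ (t:ℝ) := Nat.le_ceil _
    have hr'le : r' ≤ 1 - covDelta p (S n).card t := sum_bad_le hp0 hp1 (S n) ht1 htk hx
    set δ : ℝ := covDelta p (S n).card t with hδ
    have hδpos : 0 < δ := covDelta_pos hp0 hp1 ht1 htk
    have h1δ : 0 ≤ 1 - δ := le_trans hr'0 hr'le
    calc r' ^ N n ≤ (1 - δ) ^ N n := pow_le_pow_left₀ hr'0 hr'le (N n)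
      _ ≤ Real.exp (-δ) ^ N n := by
          apply pow_le_pow_left₀ h1δ
          have := Real.add_one_le_exp (-δ)
          linarith
      _ = Real.exp ((N n : ℝ) * (-δ)) := (Real.exp_nat_mul _ _).symm
      _ = Real.exp (-(D n)) := by
          congr 1
          rw [hD, hδ, htdef, hN n]
          simp only [hcard]
          ring
end

section
/- Let U be a random variable taking values in functions u : {0,1} → X, let S ∼ Ber(σ) be independent of U, and let Y be generated by a channel W(y|x,s) with W(y|x,1) independent of x. Define X' = U(0) (a random variable on X with distribution P_{X'}(x) = ∑_{u : u(0)=x} P_U(u)) and let Y' be the output when X' is sent through the same channel with an independent state S' ∼ Ber(σ). Then I(U;Y) = I(X';Y'). -/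
open scoped BigOperators

/-- Mutual information `I(U;Y)` (natural log) for a finite input distribution `PU`
and transition law `PYgU`. -/
noncomputable def mutInfo {U Y : Type} [Fintype U] [Fintype Y]
    (PU : U → ℝ) (PYgU : U → Y → ℝ) : ℝ :=
  ∑ u, ∑ y, PU u * PYgU u y *
    Real.log (PYgU u y / ∑ u', PU u' * PYgU u' y)

/-- If the state is `Ber(σ)` and the output law does not depend on the input when
the state is `1`, then a random strategy `U : {0,1} → X` yields the same mutual
information with the output as the deterministic input `X' = U(0)` sent through
the same channel with a fresh independent state. -/
theorem strategy_equals_constant_input (X Y : Type) [Fintype X] [Fintype Y]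
    [DecidableEq X] (W : X → Bool → Y → ℝ) (σ : ℝ) (hσ : σ ∈ Set.Icc (0 : ℝ) 1)
    (hW0 : ∀ x s y, 0 ≤ W x s y) (hW1 : ∀ x s, ∑ y, W x s y = 1)
    (hstuck : ∀ x x' y, W x true y = W x' true y)
    (PU : (Bool → X) → ℝ) (hPU0 : ∀ u, 0 ≤ PU u) (hPU1 : ∑ u, PU u = 1) :
    mutInfo PU (fun u y => (1 - σ) * W (u false) false y + σ * W (u true) true y)
      =
    mutInfo (fun x : X => ∑ u ∈ Finset.univ.filter (fun u : Bool → X => u false = x), PU u)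
      (fun x y => (1 - σ) * W x false y + σ * W x true y) := by
  set Q : X → Y → ℝ := fun x y => (1 - σ) * W x false y + σ * W x true y with hQ
  -- the channel law for u depends only on u false
  have hch : ∀ (u : Bool → X) (y : Y),
      (1 - σ) * W (u false) false y + σ * W (u true) true y = Q (u false) y := by
    intro u y
    simp only [hQ]
    rw [hstuck (u true) (u false) y]
  -- the output distribution agrees
  have hden : ∀ y : Y,
      (∑ u', PU u' * ((1 - σ) * W (u' false) false y + σ * W (u' true) true y))
        = ∑ x, (∑ u ∈ Finset.univ.filter (fun u : Bool → X => u false = x), PU u) * Q x y := by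
    intro y
    rw [← Finset.sum_fiberwise (Finset.univ) (fun u : Bool → X => u false)
        (fun u => PU u * ((1 - σ) * W (u false) false y + σ * W (u true) true y))]
    refine Finset.sum_congr rfl fun x _ => ?_
    rw [Finset.sum_mul]
    refine Finset.sum_congr rfl fun u hu => ?_
    rw [Finset.mem_filter] at hu
    rw [hch, hu.2]
  simp only [mutInfo]
  rw [← Finset.sum_fiberwise (Finset.univ) (fun u : Bool → X => u false)
      (fun u => ∑ y, PU u * ((1 - σ) * W (u false) false y + σ * W (u true) true y) *
        Real.log (((1 - σ) * W (u false) false y + σ * W (u true) true y) /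
          ∑ u', PU u' * ((1 - σ) * W (u' false) false y + σ * W (u' true) true y)))]
  refine Finset.sum_congr rfl fun x _ => ?_
  rw [Finset.sum_comm]
  refine Finset.sum_congr rfl fun y _ => ?_
  rw [Finset.sum_mul, Finset.sum_mul]
  refine Finset.sum_congr rfl fun u hu => ?_
  rw [Finset.mem_filter] at hu
  rw [hch, hden, hu.2]
end

section
/- For A > 0 and λ ≥ 0, the function λ ↦ C(A,λ) := sup_{p∈(0,1)} (pA+λ)·D(Ber(p(A+λ)/(pA+λ)) ‖ Ber(p)) is nonincreasing in λ. -/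
/-- Binary relative entropy (natural log). -/
noncomputable def klBer (q r : ℝ) : ℝ :=
  q * Real.log (q / r) + (1 - q) * Real.log ((1 - q) / (1 - r))

/-- Capacity of the peak-limited Poisson channel with peak power `A` and dark
current `lam`. -/
noncomputable def poissonCapacity (A lam : ℝ) : ℝ :=
  sSup {r : ℝ | ∃ p ∈ Set.Ioo (0 : ℝ) 1,
    r = (p * A + lam) * klBer (p * (A + lam) / (p * A + lam)) p}

/-- A closed form for the function inside the supremum. -/
noncomputable def gfun (p A l : ℝ) : ℝ :=
  p * ((A + l) * (Real.log (A + l) - Real.log (p * A + l))) +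
  (1 - p) * (l * Real.log l - l * Real.log (p * A + l))

lemma log_sub_log_le {x s : ℝ} (hx : 0 < x) (hs : 0 < s) :
    Real.log x - Real.log s ≤ x / s - 1 := by
  have h := Real.log_le_sub_one_of_pos (div_pos hx hs)
  rwa [Real.log_div hx.ne' hs.ne'] at h

lemma gfun_eq {p A l : ℝ} (hp : p ∈ Set.Ioo (0 : ℝ) 1) (hA : 0 < A) (hl : 0 ≤ l) :
    (p * A + l) * klBer (p * (A + l) / (p * A + l)) p = gfun p A l := by
  obtain ⟨hp0, hp1⟩ := hp
  have hp1' : (1 : ℝ) - p ≠ 0 := by linarith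
  have hs : 0 < p * A + l := by positivity
  have hAl : 0 < A + l := by linarith
  set s := p * A + l with hs_def
  set q := p * (A + l) / s with hq_def
  have hq_p : q / p = (A + l) / s := by
    rw [hq_def, mul_div_assoc, mul_div_cancel_left₀ _ hp0.ne']
  have h1q : 1 - q = l * (1 - p) / s := by
    rw [hq_def]; field_simp; ring
  have hq2 : (1 - q) / (1 - p) = l / s := by
    rw [h1q]; field_simp
  have hsq : s * q = p * (A + l) := by
    rw [hq_def, mul_div_cancel₀ _ hs.ne']
  have hs1q : s * (1 - q) = l * (1 - p) := by
    rw [h1q, mul_div_cancel₀ _ hs.ne']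
  unfold klBer
  rw [hq_p, hq2]
  rcases eq_or_lt_of_le hl with h0 | hlpos
  · subst h0
    have hsq' : s * q = p * A := by rw [hsq]; ring
    simp only [zero_div, Real.log_zero, mul_zero, add_zero, zero_mul, sub_zero]
    rw [Real.log_div hA.ne' hs.ne']
    unfold gfun
    simp only [mul_zero, zero_mul, Real.log_zero, sub_zero, add_zero]
    rw [show Real.log s = Real.log (p * A) from by rw [hs_def, add_zero]]
    linear_combination (Real.log A - Real.log (p * A)) * hsq'
  · rw [Real.log_div hAl.ne' hs.ne', Real.log_div hlpos.ne' hs.ne']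
    unfold gfun
    linear_combination (Real.log (A + l) - Real.log s) * hsq +
      (Real.log l - Real.log s) * hs1q

lemma gfun_hasDerivAt {p A l : ℝ} (hp : p ∈ Set.Ioo (0 : ℝ) 1) (hA : 0 < A)
    (hl : 0 < l) :
    HasDerivAt (gfun p A)
      (p * (Real.log (A + l) - Real.log (p * A + l)) +
       (1 - p) * (Real.log l - Real.log (p * A + l))) l := by
  obtain ⟨hp0, hp1⟩ := hp
  have hs : 0 < p * A + l := by positivity
  have hAl : 0 < A + l := by linarith
  have h1 : HasDerivAt (fun x : ℝ => A + x) 1 l := by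
    simpa using (hasDerivAt_id l).const_add A
  have h2 : HasDerivAt (fun x : ℝ => p * A + x) 1 l := by
    simpa using (hasDerivAt_id l).const_add (p * A)
  have hlog1 : HasDerivAt (fun x : ℝ => Real.log (A + x)) (1 / (A + l)) l := by
    simpa using h1.log hAl.ne'
  have hlog2 : HasDerivAt (fun x : ℝ => Real.log (p * A + x)) (1 / (p * A + l)) l := by
    simpa using h2.log hs.ne'
  have hlogl : HasDerivAt Real.log l⁻¹ l := Real.hasDerivAt_log hl.ne'
  have hT1 : HasDerivAt (fun x : ℝ => (A + x) * (Real.log (A + x) - Real.log (p * A + x)))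
      (1 * (Real.log (A + l) - Real.log (p * A + l)) +
        (A + l) * (1 / (A + l) - 1 / (p * A + l))) l :=
    h1.mul (hlog1.sub hlog2)
  have hT2 : HasDerivAt (fun x : ℝ => x * Real.log x - x * Real.log (p * A + x))
      ((1 * Real.log l + l * l⁻¹) - (1 * Real.log (p * A + l) + l * (1 / (p * A + l)))) l :=
    ((hasDerivAt_id l).mul hlogl).sub ((hasDerivAt_id l).mul hlog2)
  have := (hT1.const_mul p).add (hT2.const_mul (1 - p))
  refine this.congr_deriv ?_
  field_simp
  ring

lemma gfun_antitoneOn {p A : ℝ} (hp : p ∈ Set.Ioo (0 : ℝ) 1) (hA : 0 < A) :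
    AntitoneOn (gfun p A) (Set.Ici 0) := by
  obtain ⟨hp0, hp1⟩ := hp
  have hcont : ContinuousOn (gfun p A) (Set.Ici 0) := by
    have c1 : ContinuousOn (fun l : ℝ => Real.log (A + l)) (Set.Ici 0) := by
      apply ContinuousOn.log (continuousOn_const.add continuousOn_id)
      intro x hx
      have : (0 : ℝ) ≤ x := hx
      exact ne_of_gt (show (0:ℝ) < A + x by linarith)
    have c2 : ContinuousOn (fun l : ℝ => Real.log (p * A + l)) (Set.Ici 0) := by
      apply ContinuousOn.log (continuousOn_const.add continuousOn_id)
      intro x hx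
      have : (0 : ℝ) ≤ x := hx
      exact ne_of_gt (show (0:ℝ) < p * A + x by nlinarith [mul_pos hp0 hA])
    have c3 : ContinuousOn (fun l : ℝ => l * Real.log l) (Set.Ici 0) :=
      Real.continuous_mul_log.continuousOn
    exact (continuousOn_const.mul ((continuousOn_const.add continuousOn_id).mul
      (c1.sub c2))).add (continuousOn_const.mul
      (c3.sub (continuousOn_id.mul c2)))
  apply antitoneOn_of_deriv_nonpos (convex_Ici 0) hcont
  · intro x hx
    rw [interior_Ici] at hx
    exact (gfun_hasDerivAt ⟨hp0, hp1⟩ hA hx).differentiableAt.differentiableWithinAt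
  · intro x hx
    rw [interior_Ici] at hx
    have hx' : 0 < x := hx
    rw [(gfun_hasDerivAt ⟨hp0, hp1⟩ hA hx').deriv]
    have hs : 0 < p * A + x := by positivity
    have hAx : 0 < A + x := by linarith
    have e1 : Real.log (A + x) - Real.log (p * A + x) ≤ (A + x) / (p * A + x) - 1 :=
      log_sub_log_le hAx hs
    have e2 : Real.log x - Real.log (p * A + x) ≤ x / (p * A + x) - 1 :=
      log_sub_log_le hx' hs
    have key : p * ((A + x) / (p * A + x) - 1) + (1 - p) * (x / (p * A + x) - 1) = 0 := by
      field_simp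
      ring
    nlinarith [mul_le_mul_of_nonneg_left e1 hp0.le,
      mul_le_mul_of_nonneg_left e2 (by linarith : (0:ℝ) ≤ 1 - p)]

lemma gfun_le {p A l : ℝ} (hp : p ∈ Set.Ioo (0 : ℝ) 1) (hA : 0 < A) (hl : 0 ≤ l) :
    gfun p A l ≤ A + l := by
  obtain ⟨hp0, hp1⟩ := hp
  have hs : 0 < p * A + l := by positivity
  have hAl : 0 < A + l := by linarith
  have hps : p * (A + l) ≤ p * A + l := by nlinarith
  have hsA : p * A + l ≤ A + l := by nlinarith
  have e1 : Real.log (A + l) - Real.log (p * A + l) ≤ (A + l) / (p * A + l) - 1 :=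
    log_sub_log_le hAl hs
  have hratio : (0 : ℝ) ≤ (A + l) / (p * A + l) - 1 := by
    rw [sub_nonneg, le_div_iff₀ hs]; linarith
  have hT1 : p * ((A + l) * (Real.log (A + l) - Real.log (p * A + l))) ≤ A + l := by
    have h1 : p * ((A + l) * (Real.log (A + l) - Real.log (p * A + l))) ≤
        p * (A + l) * ((A + l) / (p * A + l) - 1) := by
      have := mul_le_mul_of_nonneg_left e1 (by positivity : (0:ℝ) ≤ p * (A + l))
      nlinarith
    have h2 : p * (A + l) * ((A + l) / (p * A + l) - 1) ≤
        (p * A + l) * ((A + l) / (p * A + l) - 1) :=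
      mul_le_mul_of_nonneg_right hps hratio
    have h3 : (p * A + l) * ((A + l) / (p * A + l) - 1) = (A + l) - (p * A + l) := by
      field_simp
    linarith
  have hT2 : (1 - p) * (l * Real.log l - l * Real.log (p * A + l)) ≤ 0 := by
    have h : l * Real.log l - l * Real.log (p * A + l) ≤ 0 := by
      rcases eq_or_lt_of_le hl with h0 | hlpos
      · simp [← h0]
      · have := Real.log_le_log hlpos (by nlinarith : l ≤ p * A + l)
        nlinarith
    nlinarith
  unfold gfun
  linarith

/-- The Poisson capacity is nonincreasing in the dark current. -/
theorem poissonCapacity_antitone (A : ℝ) (hA : 0 < A) :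
    ∀ lam₁ lam₂ : ℝ, 0 ≤ lam₁ → lam₁ ≤ lam₂ →
      poissonCapacity A lam₂ ≤ poissonCapacity A lam₁ := by
  intro lam₁ lam₂ h1 h12
  have h2 : (0 : ℝ) ≤ lam₂ := le_trans h1 h12
  unfold poissonCapacity
  have hbdd : BddAbove {r : ℝ | ∃ p ∈ Set.Ioo (0 : ℝ) 1,
      r = (p * A + lam₁) * klBer (p * (A + lam₁) / (p * A + lam₁)) p} := by
    refine ⟨A + lam₁, ?_⟩
    rintro r ⟨p, hp, rfl⟩
    rw [gfun_eq hp hA h1]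
    exact gfun_le hp hA h1
  apply csSup_le
  · exact ⟨_, 1/2, ⟨by norm_num, by norm_num⟩, rfl⟩
  rintro r ⟨p, hp, rfl⟩
  rw [gfun_eq hp hA h2]
  calc gfun p A lam₂ ≤ gfun p A lam₁ := gfun_antitoneOn hp hA h1 h2 h12
    _ ≤ _ := le_csSup hbdd ⟨p, hp, (gfun_eq hp hA h1).symm⟩
end

section
/- For the binary discretized Poisson channel with crossover probabilities W(1|0) = λΔ and W(1|1) = (A+λ)Δ (with (A+λ)Δ < 1), the mutual information I(X;Y) under input X ∼ Ber(p) equals Δ·[p(A+λ)log(A+λ) + (1−p)λ log λ − (pA+λ)log(pA+λ)] + o(Δ) as Δ ↓ 0, uniformly for p in compact subsets of (0,1). -/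
open scoped BigOperators

/-- Mutual information of the binary discretized Poisson channel with input
`Ber(p)` and crossover probabilities `W(1|0) = λΔ`, `W(1|1) = (A+λ)Δ`. -/
noncomputable def binPoissonMI (A lam Δ p : ℝ) : ℝ :=
  mutInfo (fun x : Bool => if x = true then p else 1 - p)
    (fun x y =>
      if y = true then (if x = true then (A + lam) * Δ else lam * Δ)
      else 1 - (if x = true then (A + lam) * Δ else lam * Δ))

/-- Bounds on `f(x) = (1-x)log(1-x) + x` for `0 ≤ x < 1`. -/
lemma f_bounds (x : ℝ) (hx : 0 ≤ x) (hx1 : x < 1) :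
    0 ≤ (1 - x) * Real.log (1 - x) + x ∧ (1 - x) * Real.log (1 - x) + x ≤ x ^ 2 := by
  have h1 : 0 < 1 - x := by linarith
  have hub : Real.log (1 - x) ≤ -x := by
    have := Real.log_le_sub_one_of_pos h1; linarith
  have hlb : -x / (1 - x) ≤ Real.log (1 - x) := by
    have h2 : Real.log (1 - x)⁻¹ ≤ (1 - x)⁻¹ - 1 :=
      Real.log_le_sub_one_of_pos (by positivity)
    rw [Real.log_inv] at h2
    have h3 : (1 - x)⁻¹ - 1 = x / (1 - x) := by field_simp; ring
    rw [h3] at h2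
    have : -x / (1 - x) = -(x / (1 - x)) := by ring
    linarith [this]
  have hmul_lb : -x ≤ (1 - x) * Real.log (1 - x) := by
    calc -x = (1 - x) * (-x / (1 - x)) := by field_simp
      _ ≤ (1 - x) * Real.log (1 - x) := mul_le_mul_of_nonneg_left hlb h1.le
  have hmul_ub : (1 - x) * Real.log (1 - x) ≤ (1 - x) * (-x) :=
    mul_le_mul_of_nonneg_left hub h1.le
  exact ⟨by linarith, by nlinarith⟩

/-- As `Δ ↓ 0`, `I(X;Y) = Δ·[p(A+λ)log(A+λ) + (1−p)λ log λ − (pA+λ)log(pA+λ)] + o(Δ)`,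
uniformly for `p` in compact subsets of `(0,1)`. -/
theorem binPoissonMI_asymptotics (A lam : ℝ) (hA : 0 < A) (hlam : 0 ≤ lam) :
    ∀ K : Set ℝ, IsCompact K → K ⊆ Set.Ioo 0 1 →
      ∀ ε > (0 : ℝ), ∃ δ > (0 : ℝ), ∀ Δ : ℝ, 0 < Δ → Δ < δ → (A + lam) * Δ < 1 →
        ∀ p ∈ K,
          |binPoissonMI A lam Δ p -
            Δ * (p * (A + lam) * Real.log (A + lam) + (1 - p) * lam * Real.log lam
              - (p * A + lam) * Real.log (p * A + lam))| ≤ ε * Δ := by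
  intro K _ hKsub ε hε
  have ha : 0 < A + lam := by linarith
  refine ⟨ε / (A + lam) ^ 2, by positivity, ?_⟩
  intro Δ hΔ hΔδ hAΔ p hp
  obtain ⟨hp0, hp1⟩ := hKsub hp
  have hμ : 0 < p * A + lam := by nlinarith
  have hμa : p * A + lam ≤ A + lam := by nlinarith
  have hba : lam * Δ ≤ (A + lam) * Δ := by nlinarith
  have hμaΔ : (p * A + lam) * Δ ≤ (A + lam) * Δ :=
    mul_le_mul_of_nonneg_right hμa hΔ.le
  have h1a : 0 < 1 - (A + lam) * Δ := by linarith
  have h1b : 0 < 1 - lam * Δ := by linarith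
  have h1μ : 0 < 1 - (p * A + lam) * Δ := by linarith
  have key : binPoissonMI A lam Δ p -
      Δ * (p * (A + lam) * Real.log (A + lam) + (1 - p) * lam * Real.log lam
        - (p * A + lam) * Real.log (p * A + lam))
      = p * ((1 - (A + lam) * Δ) * Real.log (1 - (A + lam) * Δ) + (A + lam) * Δ)
        + (1 - p) * ((1 - lam * Δ) * Real.log (1 - lam * Δ) + lam * Δ)
        - ((1 - (p * A + lam) * Δ) * Real.log (1 - (p * A + lam) * Δ)
            + (p * A + lam) * Δ) := by
    have e1 : p * ((A + lam) * Δ) + (1 - p) * (lam * Δ) = (p * A + lam) * Δ := by ring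
    have e2 : p * (1 - (A + lam) * Δ) + (1 - p) * (1 - lam * Δ)
        = 1 - (p * A + lam) * Δ := by ring
    have l1 : Real.log ((A + lam) * Δ / ((p * A + lam) * Δ))
        = Real.log (A + lam) - Real.log (p * A + lam) := by
      rw [mul_div_mul_right _ _ hΔ.ne', Real.log_div ha.ne' hμ.ne']
    have l2 : (1 - p) * (lam * Δ) * Real.log (lam * Δ / ((p * A + lam) * Δ))
        = (1 - p) * (lam * Δ) * (Real.log lam - Real.log (p * A + lam)) := by
      rcases eq_or_lt_of_le hlam with h | h
      · simp [← h]
      · rw [mul_div_mul_right _ _ hΔ.ne', Real.log_div (ne_of_gt h) hμ.ne']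
    have l3 : Real.log ((1 - (A + lam) * Δ) / (1 - (p * A + lam) * Δ))
        = Real.log (1 - (A + lam) * Δ) - Real.log (1 - (p * A + lam) * Δ) :=
      Real.log_div h1a.ne' h1μ.ne'
    have l4 : Real.log ((1 - lam * Δ) / (1 - (p * A + lam) * Δ))
        = Real.log (1 - lam * Δ) - Real.log (1 - (p * A + lam) * Δ) :=
      Real.log_div h1b.ne' h1μ.ne'
    unfold binPoissonMI mutInfo
    simp only [Fintype.sum_bool, if_true, if_false, reduceIte, Bool.false_eq_true]
    rw [e1, e2, l1, l2, l3, l4]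
    ring
  rw [key]
  obtain ⟨hF1a, hF1b⟩ := f_bounds ((A + lam) * Δ) (by positivity) (by linarith)
  obtain ⟨hF2a, hF2b⟩ := f_bounds (lam * Δ) (by positivity) (by linarith)
  obtain ⟨hF3a, hF3b⟩ := f_bounds ((p * A + lam) * Δ) (by positivity) (by linarith)
  have hsq : ((A + lam) * Δ) ^ 2 ≤ ε * Δ := by
    have h5 : Δ * (A + lam) ^ 2 < ε := (lt_div_iff₀ (by positivity)).mp hΔδ
    nlinarith
  have hsq2 : ((p * A + lam) * Δ) ^ 2 ≤ ((A + lam) * Δ) ^ 2 :=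
    pow_le_pow_left₀ (by positivity) hμaΔ 2
  have hsq3 : (lam * Δ) ^ 2 ≤ ((A + lam) * Δ) ^ 2 :=
    pow_le_pow_left₀ (by positivity) hba 2
  rw [abs_le]
  constructor
  · have hup : (1 - (p * A + lam) * Δ) * Real.log (1 - (p * A + lam) * Δ)
        + (p * A + lam) * Δ ≤ ε * Δ := by linarith
    linarith [mul_nonneg hp0.le hF1a, mul_nonneg (by linarith : (0:ℝ) ≤ 1 - p) hF2a]
  · linarith [mul_le_mul_of_nonneg_left hF1b hp0.le,
      mul_le_mul_of_nonneg_left hF2b (by linarith : (0:ℝ) ≤ 1 - p),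
      mul_le_mul_of_nonneg_left hsq3 (by linarith : (0:ℝ) ≤ 1 - p), hF3a]
end
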